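/- The function F(θ) = (1+λ)(σ₀² + ‖θ - θ₀‖₂²) + ε_test²‖θ‖₂² + 2√(2/π) ε_test ‖θ‖₂ (σ₀² + ‖θ - θ₀‖₂²)^{1/2} is convex on ℝ^p. -/

import Mathlib

private lemma sq_convexOn {E : Type*} [AddCommGroup E] [Module ℝ E] {f : E → ℝ}
    (hf : ConvexOn ℝ Set.univ f) (h0 : ∀ x, 0 ≤ f x) :
    ConvexOn ℝ Set.univ (fun x => f x ^ 2) := by
  refine ⟨convex_univ, fun x _ y _ a b ha hb hab => ?_⟩
  have h1 : f (a • x + b • y) ≤ a * f x + b * f y := by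
    simpa [smul_eq_mul] using hf.2 (Set.mem_univ x) (Set.mem_univ y) ha hb hab
  have h2 : f (a • x + b • y) ^ 2 ≤ (a * f x + b * f y) ^ 2 :=
    pow_le_pow_left₀ (h0 _) h1 2
  have h3 : (a * f x + b * f y) ^ 2 ≤ a * f x ^ 2 + b * f y ^ 2 := by
    nlinarith [mul_nonneg (mul_nonneg ha hb) (sq_nonneg (f x - f y))]
  simp only [smul_eq_mul]
  linarith

/-- Convexity of the weighted standard-plus-adversarial risk F. -/
theorem stmt_7 (p : ℕ) (θ₀ : EuclideanSpace ℝ (Fin p))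
    (σ₀ εtest lam : ℝ) (hσ : 0 ≤ σ₀) (hε : 0 ≤ εtest) (hlam : 0 ≤ lam) :
    ConvexOn ℝ Set.univ (fun θ : EuclideanSpace ℝ (Fin p) =>
      (1 + lam) * (σ₀^2 + ‖θ - θ₀‖^2) + εtest^2 * ‖θ‖^2
      + 2 * Real.sqrt (2 / Real.pi) * εtest * ‖θ‖
          * Real.sqrt (σ₀^2 + ‖θ - θ₀‖^2)) := by
  have hπ : (0:ℝ) < Real.pi := Real.pi_pos
  set g : EuclideanSpace ℝ (Fin p) → ℝ :=
    fun θ => Real.sqrt (σ₀^2 + ‖θ - θ₀‖^2) with hgdef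
  have hgnn : ∀ θ, 0 ≤ g θ := fun θ => Real.sqrt_nonneg _
  have hgsq : ∀ θ, g θ ^ 2 = σ₀^2 + ‖θ - θ₀‖^2 := fun θ =>
    Real.sq_sqrt (by positivity)
  -- convexity of g via the L2 product norm
  set v : EuclideanSpace ℝ (Fin p) → WithLp 2 (ℝ × EuclideanSpace ℝ (Fin p)) :=
    fun θ => (WithLp.equiv 2 (ℝ × EuclideanSpace ℝ (Fin p))).symm (σ₀, θ - θ₀) with hvdef
  have hkey : ∀ θ, g θ = ‖v θ‖ := by
    intro θ
    rw [hvdef]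
    rw [WithLp.prod_norm_eq_of_nat 2 (by norm_num)]
    have : ‖(σ₀, θ - θ₀).1‖ ^ 2 + ‖(σ₀, θ - θ₀).2‖ ^ 2 = σ₀ ^ 2 + ‖θ - θ₀‖ ^ 2 := by
      simp [Real.norm_eq_abs, sq_abs]
    show g θ = (‖(σ₀, θ - θ₀).1‖ ^ 2 + ‖(σ₀, θ - θ₀).2‖ ^ 2) ^ (1 / ((2:ℕ):ℝ))
    rw [this]
    show Real.sqrt (σ₀ ^ 2 + ‖θ - θ₀‖ ^ 2) = (σ₀ ^ 2 + ‖θ - θ₀‖ ^ 2) ^ (1 / ((2:ℕ):ℝ))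
    rw [Real.sqrt_eq_rpow]
    norm_num
  have hvaff : ∀ (x y : EuclideanSpace ℝ (Fin p)) (a b : ℝ), a + b = 1 →
      v (a • x + b • y) = a • v x + b • v y := by
    intro x y a b hab
    apply (WithLp.equiv 2 (ℝ × EuclideanSpace ℝ (Fin p))).symm.injective.eq_iff.mpr
    show ((σ₀, a • x + b • y - θ₀) : ℝ × EuclideanSpace ℝ (Fin p)) =
      a • ((σ₀, x - θ₀) : ℝ × EuclideanSpace ℝ (Fin p)) + b • (σ₀, y - θ₀)
    rw [Prod.smul_mk, Prod.smul_mk, Prod.mk_add_mk, Prod.mk.injEq]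
    constructor
    · show σ₀ = a • σ₀ + b • σ₀
      simp only [smul_eq_mul]
      linear_combination (-σ₀) * hab
    · show a • x + b • y - θ₀ = a • (x - θ₀) + b • (y - θ₀)
      match_scalars <;> linarith
  have hgconv : ConvexOn ℝ Set.univ g := by
    refine ⟨convex_univ, ?_⟩
    intro x _ y _ a b ha hb hab
    rw [hkey, hkey, hkey, hvaff x y a b hab]
    calc ‖a • v x + b • v y‖ ≤ ‖a • v x‖ + ‖b • v y‖ := norm_add_le _ _
      _ = a * ‖v x‖ + b * ‖v y‖ := by
          rw [norm_smul, norm_smul, Real.norm_of_nonneg ha, Real.norm_of_nonneg hb]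
      _ = a • ‖v x‖ + b • ‖v y‖ := by simp [smul_eq_mul]
  -- h = ε‖θ‖ + √(2/π) g θ is convex and nonneg
  set h : EuclideanSpace ℝ (Fin p) → ℝ :=
    fun θ => εtest * ‖θ‖ + Real.sqrt (2 / Real.pi) * g θ with hhdef
  have hhnn : ∀ θ, 0 ≤ h θ := by
    intro θ
    have := hgnn θ
    have := Real.sqrt_nonneg (2 / Real.pi)
    positivity
  have hhconv : ConvexOn ℝ Set.univ h := by
    have h1 : ConvexOn ℝ Set.univ (fun θ : EuclideanSpace ℝ (Fin p) => εtest • ‖θ‖) :=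
      convexOn_univ_norm.smul hε
    have h2 : ConvexOn ℝ Set.univ (fun θ => Real.sqrt (2 / Real.pi) • g θ) :=
      hgconv.smul (Real.sqrt_nonneg _)
    have := h1.add h2
    exact this
  have hh2 : ConvexOn ℝ Set.univ (fun θ => h θ ^ 2) := sq_convexOn hhconv hhnn
  have hg2 : ConvexOn ℝ Set.univ (fun θ => g θ ^ 2) := sq_convexOn hgconv hgnn
  have hc : (0:ℝ) ≤ 1 + lam - 2 / Real.pi := by
    have h3 : (3:ℝ) < Real.pi := Real.pi_gt_three
    have : 2 / Real.pi ≤ 2 / 3 := by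
      apply div_le_div_of_nonneg_left (by norm_num) (by norm_num) (le_of_lt h3)
    linarith
  have hsum : ConvexOn ℝ Set.univ
      (fun θ => h θ ^ 2 + (1 + lam - 2 / Real.pi) • (g θ ^ 2)) :=
    hh2.add ((hg2.smul hc))
  have heq : (fun θ : EuclideanSpace ℝ (Fin p) =>
      (1 + lam) * (σ₀^2 + ‖θ - θ₀‖^2) + εtest^2 * ‖θ‖^2
      + 2 * Real.sqrt (2 / Real.pi) * εtest * ‖θ‖
          * Real.sqrt (σ₀^2 + ‖θ - θ₀‖^2))
      = fun θ => h θ ^ 2 + (1 + lam - 2 / Real.pi) • (g θ ^ 2) := by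
    funext θ
    have e1 : Real.sqrt (2 / Real.pi) ^ 2 = 2 / Real.pi :=
      Real.sq_sqrt (by positivity)
    show (1 + lam) * (σ₀^2 + ‖θ - θ₀‖^2) + εtest^2 * ‖θ‖^2
      + 2 * Real.sqrt (2 / Real.pi) * εtest * ‖θ‖ * g θ
      = h θ ^ 2 + (1 + lam - 2 / Real.pi) * (g θ ^ 2)
    rw [hhdef]
    linear_combination (1 + lam) * (hgsq θ).symm - (g θ ^ 2) * e1
  rw [heq]
  exact hsum
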